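/- If Ω_{t+1}^{n+1} > 0 then the smallest maximizer satisfies ℓ_{t+1}^{n+1} = ℓ_t^n + 1; if Ω_{t+1}^{n+1} = 0 then ℓ_{t+1}^{n+1} = 0. -/

import Mathlib

/-- a_{t,k} := ∑_{i=1}^k (c_{t-i} - ρ·C̄). -/
noncomputable def a (c : ℕ → ℝ) (ρ Cb : ℝ) (t k : ℕ) : ℝ :=
  ∑ i ∈ Finset.Icc 1 k, (c (t - i) - ρ * Cb)

/-- Ω_t^n := max_{0 ≤ k ≤ n} a_{t,k}. -/
noncomputable def Omega (c : ℕ → ℝ) (ρ Cb : ℝ) (t n : ℕ) : ℝ :=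
  (Finset.range (n + 1)).sup' (Finset.nonempty_range_iff.mpr (Nat.succ_ne_zero n))
    (fun k => a c ρ Cb t k)

/-- ℓ is the smallest maximizer of a_{t,k} over 0 ≤ k ≤ n. -/
def IsSmallestArgmax (c : ℕ → ℝ) (ρ Cb : ℝ) (t n ℓ : ℕ) : Prop :=
  ℓ ≤ n ∧ a c ρ Cb t ℓ = Omega c ρ Cb t n ∧
    ∀ k, k ≤ n → a c ρ Cb t k = Omega c ρ Cb t n → ℓ ≤ k

lemma a_range (c : ℕ → ℝ) (ρ Cb : ℝ) (t k : ℕ) :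
    a c ρ Cb t k = ∑ i ∈ Finset.range k, (c (t - 1 - i) - ρ * Cb) := by
  induction k with
  | zero => simp [a]
  | succ k ih =>
    rw [a, Finset.sum_Icc_succ_top (Nat.one_le_iff_ne_zero.mpr (Nat.succ_ne_zero k)),
      ← a, ih, Finset.sum_range_succ]
    congr 3
    omega

lemma a_shift (c : ℕ → ℝ) (ρ Cb : ℝ) (t k : ℕ) :
    a c ρ Cb (t + 1) (k + 1) = a c ρ Cb t k + (c t - ρ * Cb) := by
  rw [a_range, a_range, Finset.sum_range_succ']
  simp only [Nat.add_sub_cancel]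
  congr 1
  apply Finset.sum_congr rfl
  intro i _
  congr 2
  omega

lemma a_zero (c : ℕ → ℝ) (ρ Cb : ℝ) (t : ℕ) : a c ρ Cb t 0 = 0 := by
  simp [a]

theorem stmt_2 (c : ℕ → ℝ) (ρ Cb : ℝ) (hρ : ρ ∈ Set.Icc (0:ℝ) 1) (hCb : 0 < Cb)
    (t n : ℕ) (hn : n ≤ t) (ℓtn ℓt1n1 : ℕ)
    (h1 : IsSmallestArgmax c ρ Cb t n ℓtn)
    (h2 : IsSmallestArgmax c ρ Cb (t + 1) (n + 1) ℓt1n1) :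
    (0 < Omega c ρ Cb (t + 1) (n + 1) → ℓt1n1 = ℓtn + 1) ∧
    (Omega c ρ Cb (t + 1) (n + 1) = 0 → ℓt1n1 = 0) := by
  obtain ⟨hL1, hA1, hMin1⟩ := h1
  obtain ⟨hL2, hA2, hMin2⟩ := h2
  constructor
  · intro hpos
    -- ℓt1n1 ≠ 0
    have hne : ℓt1n1 ≠ 0 := by
      intro h0
      rw [h0, a_zero] at hA2
      exact absurd hA2.symm (ne_of_gt hpos)
    obtain ⟨m, rfl⟩ := Nat.exists_eq_succ_of_ne_zero hne
    have hm_le : m ≤ n := by omega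
    -- Ω' ≥ Ω + d
    have hge : Omega c ρ Cb t n + (c t - ρ * Cb) ≤ Omega c ρ Cb (t + 1) (n + 1) := by
      rw [← hA1, ← a_shift]
      exact Finset.le_sup' (fun k => a c ρ Cb (t+1) k)
        (Finset.mem_range.mpr (by omega : ℓtn + 1 < n + 1 + 1))
    -- a(t,m) ≤ Ω
    have hle : a c ρ Cb t m ≤ Omega c ρ Cb t n :=
      Finset.le_sup' (fun k => a c ρ Cb t k) (Finset.mem_range.mpr (by omega))
    have hshift := a_shift c ρ Cb t m
    have ham : a c ρ Cb t m = Omega c ρ Cb t n := by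
      have : a c ρ Cb t m + (c t - ρ * Cb) = Omega c ρ Cb (t + 1) (n + 1) := by
        rw [← hshift]; exact hA2
      linarith
    have hOm : Omega c ρ Cb (t + 1) (n + 1) = Omega c ρ Cb t n + (c t - ρ * Cb) := by
      rw [← hA2, hshift, ham]
    have h1le : ℓtn ≤ m := hMin1 m hm_le ham
    have h2le : m + 1 ≤ ℓtn + 1 := by
      apply hMin2 (ℓtn + 1) (by omega)
      rw [a_shift, hA1, hOm]
    omega
  · intro h0
    have := hMin2 0 (Nat.zero_le _) (by rw [a_zero, h0])
    omega
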